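/- Let G be a finite directed graph with nonnegative arc capacities and distinguished nodes s, t, and let e be an arc of G. If the minimum s-t cut capacity of G with e removed is strictly less than the minimum s-t cut capacity of G, then the minimum capacity over all s-t cuts of G that contain e equals (minimum s-t cut capacity of G − e) + c(e). -/
import Mathlib


open Finset

/-- Capacity of the s-t cut determined by `S` (arcs from `S` to its complement). -/
def cutCap {V : Type*} [Fintype V] [DecidableEq V] (c : V → V → ℝ) (S : Finset V) : ℝ :=
  ∑ x ∈ S, ∑ y ∈ Sᶜ, c x y

/-- Minimum capacity of an s-t cut. -/
noncomputable def minCut {V : Type*} [Fintype V] [DecidableEq V] (c : V → V → ℝ)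
    (s t : V) : ℝ :=
  sInf {r | ∃ S : Finset V, s ∈ S ∧ t ∉ S ∧ r = cutCap c S}

/-- The graph with arc `e` deleted (its capacity set to `0`). -/
def delArc {V : Type*} [DecidableEq V] (c : V → V → ℝ) (e : V × V) : V → V → ℝ :=
  fun x y => if (x, y) = e then 0 else c x y

/-- Minimum capacity among s-t cuts crossed by the arc `e`. -/
noncomputable def minCutCross {V : Type*} [Fintype V] [DecidableEq V] (c : V → V → ℝ)
    (s t : V) (e : V × V) : ℝ :=
  sInf {r | ∃ S : Finset V, s ∈ S ∧ t ∉ S ∧ e.1 ∈ S ∧ e.2 ∉ S ∧ r = cutCap c S}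

lemma cutCap_delArc_of_not_cross {V : Type*} [Fintype V] [DecidableEq V]
    (c : V → V → ℝ) (e : V × V) (S : Finset V) (h : ¬ (e.1 ∈ S ∧ e.2 ∉ S)) :
    cutCap (delArc c e) S = cutCap c S := by
  unfold cutCap delArc
  refine Finset.sum_congr rfl fun x hx => Finset.sum_congr rfl fun y hy => ?_
  rw [if_neg]
  rintro rfl
  exact h ⟨hx, by simpa using hy⟩

lemma cutCap_of_cross {V : Type*} [Fintype V] [DecidableEq V]
    (c : V → V → ℝ) (e : V × V) (S : Finset V) (h1 : e.1 ∈ S) (h2 : e.2 ∉ S) :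
    cutCap c S = cutCap (delArc c e) S + c e.1 e.2 := by
  unfold cutCap delArc
  have key : ∀ x y : V, c x y =
      (if (x, y) = e then 0 else c x y) + (if (x, y) = e then c e.1 e.2 else 0) := by
    intro x y
    by_cases hxy : (x, y) = e
    · rw [if_pos hxy, if_pos hxy, zero_add, ← hxy]
    · rw [if_neg hxy, if_neg hxy, add_zero]
  calc ∑ x ∈ S, ∑ y ∈ Sᶜ, c x y
      = ∑ x ∈ S, ∑ y ∈ Sᶜ, ((if (x, y) = e then 0 else c x y)
          + (if (x, y) = e then c e.1 e.2 else 0)) := by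
        refine Finset.sum_congr rfl fun x _ => Finset.sum_congr rfl fun y _ => key x y
    _ = (∑ x ∈ S, ∑ y ∈ Sᶜ, if (x, y) = e then 0 else c x y)
          + ∑ x ∈ S, ∑ y ∈ Sᶜ, (if (x, y) = e then c e.1 e.2 else 0) := by
        rw [← Finset.sum_add_distrib]
        refine Finset.sum_congr rfl fun x _ => by rw [← Finset.sum_add_distrib]
    _ = (∑ x ∈ S, ∑ y ∈ Sᶜ, if (x, y) = e then 0 else c x y) + c e.1 e.2 := by
        congr 1
        have hinner : ∀ x ∈ S, (∑ y ∈ Sᶜ, if (x, y) = e then c e.1 e.2 else 0)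
            = if x = e.1 then c e.1 e.2 else 0 := by
          intro x _
          by_cases hx1 : x = e.1
          · rw [if_pos hx1]
            have hiff : ∀ y : V, ((x, y) = e) = (y = e.2) := fun y =>
              propext ⟨fun hy => by rw [← hy], fun hy => by rw [hx1, hy]⟩
            simp only [hiff]
            rw [Finset.sum_ite_eq' Sᶜ e.2 (fun _ => c e.1 e.2)]
            rw [if_pos (by simpa using h2)]
          · rw [if_neg hx1]
            refine Finset.sum_eq_zero fun y _ => ?_
            rw [if_neg]
            intro hy
            exact hx1 (congrArg Prod.fst hy)
        rw [Finset.sum_congr rfl hinner,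
          Finset.sum_ite_eq' S e.1 (fun _ => c e.1 e.2), if_pos h1]

theorem min_crossing_cut_eq_of_minCut_lt {V : Type*} [Fintype V] [DecidableEq V]
    (c : V → V → ℝ) (hc : ∀ x y, 0 ≤ c x y) (s t : V) (hst : s ≠ t) (e : V × V)
    (h : minCut (delArc c e) s t < minCut c s t) :
    minCutCross c s t e = minCut (delArc c e) s t + c e.1 e.2 := by
  set d := delArc c e with hd
  set A : Set ℝ := {r | ∃ S : Finset V, s ∈ S ∧ t ∉ S ∧ r = cutCap d S} with hA
  set B : Set ℝ := {r | ∃ S : Finset V, s ∈ S ∧ t ∉ S ∧ e.1 ∈ S ∧ e.2 ∉ S ∧ r = cutCap c S}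
    with hB
  set C : Set ℝ := {r | ∃ S : Finset V, s ∈ S ∧ t ∉ S ∧ r = cutCap c S} with hC
  have hAfin : A.Finite := by
    refine (Set.finite_range (cutCap d)).subset ?_
    rintro r ⟨S, _, _, rfl⟩; exact ⟨S, rfl⟩
  have hBfin : B.Finite := by
    refine (Set.finite_range (cutCap c)).subset ?_
    rintro r ⟨S, _, _, _, _, rfl⟩; exact ⟨S, rfl⟩
  have hCfin : C.Finite := by
    refine (Set.finite_range (cutCap c)).subset ?_
    rintro r ⟨S, _, _, rfl⟩; exact ⟨S, rfl⟩
  have hAne : A.Nonempty := ⟨cutCap d {s}, {s}, by simp, by simp [Ne.symm hst], rfl⟩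
  have hmemA : sInf A ∈ A := hAne.csInf_mem hAfin
  obtain ⟨S0, hs0, ht0, hval0⟩ := hmemA
  have hcross0 : e.1 ∈ S0 ∧ e.2 ∉ S0 := by
    by_contra hcon
    have heq : cutCap d S0 = cutCap c S0 := cutCap_delArc_of_not_cross c e S0 hcon
    have hle : minCut c s t ≤ cutCap c S0 :=
      csInf_le hCfin.bddBelow ⟨S0, hs0, ht0, rfl⟩
    have hmc : minCut c s t = sInf C := rfl
    have hmd : minCut d s t = sInf A := rfl
    rw [hmc] at hle
    have hh : sInf A < sInf C := h
    linarith [hval0, heq]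
  have hS0val : cutCap c S0 = cutCap d S0 + c e.1 e.2 :=
    cutCap_of_cross c e S0 hcross0.1 hcross0.2
  have hBne : B.Nonempty := ⟨cutCap c S0, S0, hs0, ht0, hcross0.1, hcross0.2, rfl⟩
  have hmemB : sInf B ∈ B := hBne.csInf_mem hBfin
  obtain ⟨S1, hs1, ht1, he1, he2, hval1⟩ := hmemB
  have hS1val : cutCap c S1 = cutCap d S1 + c e.1 e.2 :=
    cutCap_of_cross c e S1 he1 he2
  have hge : minCut (delArc c e) s t + c e.1 e.2 ≤ minCutCross c s t e := by
    have hle : minCut (delArc c e) s t ≤ cutCap d S1 :=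
      csInf_le hAfin.bddBelow ⟨S1, hs1, ht1, rfl⟩
    have hmc : minCutCross c s t e = sInf B := rfl
    have hmd : minCut (delArc c e) s t = sInf A := rfl
    rw [hmc, hval1, hS1val, hmd]
    linarith
  have hle : minCutCross c s t e ≤ minCut (delArc c e) s t + c e.1 e.2 := by
    have h1 : minCutCross c s t e ≤ cutCap c S0 :=
      csInf_le hBfin.bddBelow ⟨S0, hs0, ht0, hcross0.1, hcross0.2, rfl⟩
    have h2 : minCut (delArc c e) s t = cutCap d S0 := hval0
    linarith
  linarith
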